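/- Let H be a graph and R ⊆ V(H) an independent set of H. Suppose H₁ is a proper induced subgraph of H containing R, and let H₂ := H with the edges of H₁ removed. Then the maximum rooted density satisfies m(H,R) ≤ max{ m(H₁,R), m(H₂,V(H₁)) }. -/

import Mathlib

open Finset

variable {V : Type} [Fintype V]

/-- The maximum rooted density `m(H,R)` of a graph `H` at a root set `R`:
the supremum of `e(H') / |V(H') \ R|` over subgraphs `H'` of `H` with
`V(H') \ R` nonempty. -/
noncomputable def rootedDensity (H : SimpleGraph V) (R : Set V) : ℝ :=
  sSup {x : ℝ | ∃ H' : H.Subgraph, (H'.verts \ R).Nonempty ∧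
    x = (H'.edgeSet.ncard : ℝ) / ((H'.verts \ R).ncard : ℝ)}

/-- The induced subgraph of `H` on a vertex subset `S` (as a graph on the same
vertex type, with vertices outside `S` isolated). -/
def inducedOn (H : SimpleGraph V) (S : Set V) : SimpleGraph V where
  Adj u v := H.Adj u v ∧ u ∈ S ∧ v ∈ S
  symm := ⟨fun u v h => ⟨h.1.symm, h.2.2, h.2.1⟩⟩
  loopless := ⟨fun u h => H.loopless.irrefl u h.1⟩

/-- The graph `H` with all edges inside `S` removed. -/
def removeWithin (H : SimpleGraph V) (S : Set V) : SimpleGraph V where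
  Adj u v := H.Adj u v ∧ ¬(u ∈ S ∧ v ∈ S)
  symm := ⟨fun u v h => ⟨h.1.symm, fun hc => h.2 ⟨hc.2, hc.1⟩⟩⟩
  loopless := ⟨fun u h => H.loopless.irrefl u h.1⟩

lemma density_mem_nonneg (G : SimpleGraph V) (T : Set V) :
    ∀ x ∈ {x : ℝ | ∃ H' : G.Subgraph, (H'.verts \ T).Nonempty ∧
      x = (H'.edgeSet.ncard : ℝ) / ((H'.verts \ T).ncard : ℝ)}, 0 ≤ x := by
  rintro x ⟨H', hne, rfl⟩
  positivity

lemma rootedDensity_nonneg (G : SimpleGraph V) (T : Set V) : 0 ≤ rootedDensity G T :=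
  Real.sSup_nonneg (density_mem_nonneg G T)

lemma density_bddAbove (G : SimpleGraph V) (T : Set V) :
    BddAbove {x : ℝ | ∃ H' : G.Subgraph, (H'.verts \ T).Nonempty ∧
      x = (H'.edgeSet.ncard : ℝ) / ((H'.verts \ T).ncard : ℝ)} := by
  refine ⟨(Fintype.card (Sym2 V) : ℝ), ?_⟩
  rintro x ⟨H', hne, rfl⟩
  have hd : 1 ≤ ((H'.verts \ T).ncard : ℝ) := by
    have : 0 < (H'.verts \ T).ncard := (Set.ncard_pos (Set.toFinite _)).2 hne
    exact_mod_cast this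
  have he : (H'.edgeSet.ncard : ℝ) ≤ (Fintype.card (Sym2 V) : ℝ) := by
    have := Set.ncard_le_ncard (Set.subset_univ H'.edgeSet) (Set.toFinite _)
    rw [Set.ncard_univ, Nat.card_eq_fintype_card] at this
    exact_mod_cast this
  calc (H'.edgeSet.ncard : ℝ) / ((H'.verts \ T).ncard : ℝ)
      ≤ (H'.edgeSet.ncard : ℝ) := div_le_self (by positivity) hd
    _ ≤ _ := he

lemma mediant_le {e₁ e₂ a b : ℝ} (ha : 0 < a) (hb : 0 < b) :
    (e₁ + e₂) / (a + b) ≤ max (e₁ / a) (e₂ / b) := by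
  rw [div_le_iff₀ (by linarith)]
  have h1 : e₁ = (e₁ / a) * a := (div_mul_cancel₀ _ ha.ne').symm
  have h2 : e₂ = (e₂ / b) * b := (div_mul_cancel₀ _ hb.ne').symm
  have m1 : (e₁ / a) * a ≤ max (e₁ / a) (e₂ / b) * a :=
    mul_le_mul_of_nonneg_right (le_max_left _ _) ha.le
  have m2 : (e₂ / b) * b ≤ max (e₁ / a) (e₂ / b) * b :=
    mul_le_mul_of_nonneg_right (le_max_right _ _) hb.le
  calc e₁ + e₂ = (e₁ / a) * a + (e₂ / b) * b := by rw [← h1, ← h2]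
    _ ≤ max (e₁ / a) (e₂ / b) * a + max (e₁ / a) (e₂ / b) * b := add_le_add m1 m2
    _ = max (e₁ / a) (e₂ / b) * (a + b) := by ring

/-- If `R` is an independent set of `H`, `H₁` is a proper induced subgraph of `H`
(on vertex set `S`) containing `R`, and `H₂ = H` minus the edges of `H₁`, then
`m(H,R) ≤ max { m(H₁,R), m(H₂, V(H₁)) }`. -/
theorem rootedDensity_concatenate (H : SimpleGraph V) (R S : Set V)
    (hindep : ∀ u ∈ R, ∀ v ∈ R, ¬H.Adj u v)
    (hRS : R ⊆ S) (hproper : S ≠ Set.univ) :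
    rootedDensity H R ≤
      max (rootedDensity (inducedOn H S) R) (rootedDensity (removeWithin H S) S) := by
  classical
  apply Real.sSup_le _ (le_max_of_le_left (rootedDensity_nonneg _ _))
  rintro x ⟨H', hne, rfl⟩
  set H₁' : (inducedOn H S).Subgraph :=
    { verts := H'.verts ∩ S
      Adj := fun u v => H'.Adj u v ∧ u ∈ S ∧ v ∈ S
      adj_sub := fun {u v} h => show H.Adj u v ∧ u ∈ S ∧ v ∈ S from ⟨H'.adj_sub h.1, h.2⟩
      edge_vert := fun h => ⟨H'.edge_vert h.1, h.2.1⟩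
      symm := ⟨fun u v h => ⟨h.1.symm, h.2.2, h.2.1⟩⟩ } with hH₁'
  set H₂' : (removeWithin H S).Subgraph :=
    { verts := H'.verts
      Adj := fun u v => H'.Adj u v ∧ ¬(u ∈ S ∧ v ∈ S)
      adj_sub := fun {u v} h => show H.Adj u v ∧ ¬(u ∈ S ∧ v ∈ S) from ⟨H'.adj_sub h.1, h.2⟩
      edge_vert := fun h => H'.edge_vert h.1
      symm := ⟨fun u v h => ⟨h.1.symm, fun hc => h.2 ⟨hc.2, hc.1⟩⟩⟩ } with hH₂'
  -- edge decomposition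
  have hedge : H'.edgeSet = H₁'.edgeSet ∪ H₂'.edgeSet := by
    ext e
    induction e using Sym2.ind with
    | _ u v =>
      simp only [SimpleGraph.Subgraph.mem_edgeSet, Set.mem_union, hH₁', hH₂']
      by_cases h : u ∈ S ∧ v ∈ S <;> tauto
  have hdisj : Disjoint H₁'.edgeSet H₂'.edgeSet := by
    rw [Set.disjoint_left]
    intro e h1 h2
    induction e using Sym2.ind with
    | _ u v =>
      rw [SimpleGraph.Subgraph.mem_edgeSet] at h1 h2
      exact h2.2 h1.2
  have hecard : H'.edgeSet.ncard = H₁'.edgeSet.ncard + H₂'.edgeSet.ncard := by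
    rw [hedge, Set.ncard_union_eq hdisj (Set.toFinite _) (Set.toFinite _)]
  -- vertex decomposition
  have hvert : H'.verts \ R = (H₁'.verts \ R) ∪ (H₂'.verts \ S) := by
    ext u
    simp only [Set.mem_diff, Set.mem_union, Set.mem_inter_iff, hH₁', hH₂']
    constructor
    · rintro ⟨hu, hnr⟩
      by_cases hs : u ∈ S
      · exact Or.inl ⟨⟨hu, hs⟩, hnr⟩
      · exact Or.inr ⟨hu, hs⟩
    · rintro (⟨⟨hu, _⟩, hnr⟩ | ⟨hu, hns⟩)
      · exact ⟨hu, hnr⟩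
      · exact ⟨hu, fun hr => hns (hRS hr)⟩
  have hvdisj : Disjoint (H₁'.verts \ R) (H₂'.verts \ S) := by
    rw [Set.disjoint_left]
    rintro u ⟨⟨_, hs⟩, _⟩ ⟨_, hns⟩
    exact hns hs
  have hvcard : (H'.verts \ R).ncard = (H₁'.verts \ R).ncard + (H₂'.verts \ S).ncard := by
    rw [hvert, Set.ncard_union_eq hvdisj (Set.toFinite _) (Set.toFinite _)]
  set e₁ := H₁'.edgeSet.ncard
  set e₂ := H₂'.edgeSet.ncard
  set a := (H₁'.verts \ R).ncard
  set b := (H₂'.verts \ S).ncard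
  have hd : 0 < (H'.verts \ R).ncard := (Set.ncard_pos (Set.toFinite _)).2 hne
  have hmem1 : a ≠ 0 → (e₁ : ℝ) / (a : ℝ) ≤ rootedDensity (inducedOn H S) R := by
    intro ha
    apply le_csSup (density_bddAbove _ _)
    exact ⟨H₁', (Set.nonempty_of_ncard_ne_zero ha), rfl⟩
  have hmem2 : b ≠ 0 → (e₂ : ℝ) / (b : ℝ) ≤ rootedDensity (removeWithin H S) S := by
    intro hb
    apply le_csSup (density_bddAbove _ _)
    exact ⟨H₂', (Set.nonempty_of_ncard_ne_zero hb), rfl⟩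
  by_cases hb : b = 0
  · -- all vertices in S (no, b = 0 means verts \ S empty); e₂ = 0
    have hsub : H'.verts ⊆ S := by
      intro u hu
      by_contra hns
      exact (Set.eq_empty_iff_forall_notMem.1
        ((Set.ncard_eq_zero (Set.toFinite _)).1 hb) u) ⟨hu, hns⟩
    have he2 : e₂ = 0 := by
      rw [Set.ncard_eq_zero (Set.toFinite _)]
      ext e
      induction e using Sym2.ind with
      | _ u v =>
        simp only [SimpleGraph.Subgraph.mem_edgeSet, Set.mem_empty_iff_false, iff_false]
        rintro ⟨hadj, hns⟩
        exact hns ⟨hsub (H'.edge_vert hadj), hsub (H'.edge_vert hadj.symm)⟩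
    have ha : a ≠ 0 := by
      intro ha0
      rw [hvcard, ha0, hb] at hd
      exact absurd hd (by simp)
    have : (H'.edgeSet.ncard : ℝ) / ((H'.verts \ R).ncard : ℝ) = (e₁ : ℝ) / (a : ℝ) := by
      rw [hecard, hvcard, he2, hb]
      norm_num
    rw [this]
    exact le_max_of_le_left (hmem1 ha)
  · by_cases ha : a = 0
    · -- verts ∩ S ⊆ R, so e₁ = 0 by independence
      have hsub : H'.verts ∩ S ⊆ R := by
        intro u hu
        by_contra hnr
        exact (Set.eq_empty_iff_forall_notMem.1
          ((Set.ncard_eq_zero (Set.toFinite _)).1 ha) u) ⟨hu, hnr⟩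
      have he1 : e₁ = 0 := by
        rw [Set.ncard_eq_zero (Set.toFinite _)]
        ext e
        induction e using Sym2.ind with
        | _ u v =>
          simp only [SimpleGraph.Subgraph.mem_edgeSet, Set.mem_empty_iff_false, iff_false]
          rintro ⟨hadj, huS, hvS⟩
          exact hindep u (hsub ⟨H'.edge_vert hadj, huS⟩) v
            (hsub ⟨H'.edge_vert hadj.symm, hvS⟩) (H'.adj_sub hadj)
      have : (H'.edgeSet.ncard : ℝ) / ((H'.verts \ R).ncard : ℝ) = (e₂ : ℝ) / (b : ℝ) := by
        rw [hecard, hvcard, he1, ha]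
        norm_num
      rw [this]
      exact le_max_of_le_right (hmem2 hb)
    · have hapos : (0 : ℝ) < (a : ℝ) := Nat.cast_pos.2 (Nat.pos_of_ne_zero ha)
      have hbpos : (0 : ℝ) < (b : ℝ) := Nat.cast_pos.2 (Nat.pos_of_ne_zero hb)
      have : (H'.edgeSet.ncard : ℝ) / ((H'.verts \ R).ncard : ℝ)
          = ((e₁ : ℝ) + (e₂ : ℝ)) / ((a : ℝ) + (b : ℝ)) := by
        rw [hecard, hvcard]; push_cast; ring
      rw [this]
      exact le_trans (mediant_le hapos hbpos) (max_le_max (hmem1 ha) (hmem2 hb))
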